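/- The ℤ-jump E_0^{[ℤ]} is Borel reducible to its pairwise-inequivalent part (E_0)^{[ℤ]}_p.i., i.e., E_0^{[ℤ]} is Borel reducible to the restriction of E_0^{[ℤ]} to the set of x ∈ (2^ω)^ℤ whose coordinates are pairwise E_0-inequivalent. -/

import Mathlib

/-- The Γ-jump of an equivalence relation `E` on `X`. -/
def GammaJump (Γ : Type*) [Group Γ] {X : Type*} (E : X → X → Prop) :
    (Γ → X) → (Γ → X) → Prop :=
  fun x y => ∃ γ : Γ, ∀ α : Γ, E (x (γ⁻¹ * α)) (y α)

/-- Borel reducibility of binary relations on measurable spaces. -/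
def BorelReducible {X Y : Type*} [MeasurableSpace X] [MeasurableSpace Y]
    (E : X → X → Prop) (F : Y → Y → Prop) : Prop :=
  ∃ f : X → Y, Measurable f ∧ ∀ x x', E x x' ↔ F (f x) (f x')

/-- `E₀`: eventual agreement on `2^ω`. -/
def E0 : (ℕ → Bool) → (ℕ → Bool) → Prop :=
  fun x y => ∀ᶠ n in Filter.atTop, x n = y n

/-- The pairwise-inequivalent part of `X^Γ`. -/
def PIPart (Γ : Type*) {X : Type*} (E : X → X → Prop) : Set (Γ → X) :=
  {x | ∀ γ δ : Γ, γ ≠ δ → ¬ E (x γ) (x δ)}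

noncomputable section
namespace E0Red

open Filter Classical

attribute [local instance] Classical.propDecidable

abbrev Pt := ℕ → Bool
abbrev Cfg := ℤ → Pt

lemma e0_def {z w : Pt} : E0 z w ↔ ∃ N, ∀ n ≥ N, z n = w n := by
  simpa [E0] using Filter.eventually_atTop

lemma e0_refl (z : Pt) : E0 z z := by simp [E0]

lemma e0_symm {z w : Pt} (h : E0 z w) : E0 w z := h.mono fun n hn => hn.symm

lemma e0_trans {z w v : Pt} (h1 : E0 z w) (h2 : E0 w v) : E0 z v :=
  (h1.and h2).mono fun n hn => hn.1.trans hn.2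

/-- Boolean truth value of a proposition (classical). -/
def cb (P : Prop) : Bool := if P then true else false

lemma cb_iff {P : Prop} : cb P = true ↔ P := by
  by_cases h : P <;> simp [cb, h]

lemma cb_congr {P Q : Prop} (h : P ↔ Q) : cb P = cb Q := by
  by_cases hp : P
  · rw [cb, cb, if_pos hp, if_pos (h.1 hp)]
  · rw [cb, cb, if_neg hp, if_neg (fun hq => hp (h.2 hq))]

lemma cb_eq_cb_iff {P Q : Prop} : cb P = cb Q ↔ (P ↔ Q) := by
  constructor
  · intro h
    constructor
    · intro hp; exact cb_iff.1 (by rw [← h]; exact cb_iff.2 hp)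
    · intro hq; exact cb_iff.1 (by rw [h]; exact cb_iff.2 hq)
  · exact cb_congr

lemma bool_of_iff {a b : Bool} (h : a = true ↔ b = true) : a = b := by
  cases a <;> cases b <;> simp_all

/-- If bits can only differ when both unpaired components are small, then E0. -/
lemma e0_of_unpair {F G : Pt} (L N : ℕ)
    (h : ∀ r : ℕ, L ≤ (Nat.unpair r).1 ∨ N ≤ (Nat.unpair r).2 → F r = G r) :
    E0 F G := by
  rw [e0_def]
  refine ⟨1 + ((Finset.range L ×ˢ Finset.range N).sup fun q => Nat.pair q.1 q.2), ?_⟩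
  intro r hr
  by_cases hc : L ≤ (Nat.unpair r).1 ∨ N ≤ (Nat.unpair r).2
  · exact h r hc
  · push_neg at hc
    exfalso
    have hmem : ((Nat.unpair r).1, (Nat.unpair r).2) ∈ Finset.range L ×ˢ Finset.range N := by
      simp [Finset.mem_product, hc.1, hc.2]
    have := Finset.le_sup (f := fun q : ℕ × ℕ => Nat.pair q.1 q.2) hmem
    simp only [Nat.pair_unpair] at this
    omega

/-- the coordinate codec: even track carries exact data (infinitely repeated),
odd track carries E0-compared data. -/
def coord (EX EV : Pt) : Pt := fun b =>
  if b % 2 = 0 then EX (Nat.unpair (b / 2)).1 else EV (b / 2)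

lemma coord_e0_iff {EX EV EX' EV' : Pt} :
    E0 (coord EX EV) (coord EX' EV') ↔ EX = EX' ∧ E0 EV EV' := by
  constructor
  · intro h
    obtain ⟨N, hN⟩ := e0_def.1 h
    constructor
    · funext s
      have hb : 2 * Nat.pair s N ≥ N := le_trans (Nat.right_le_pair s N) (by omega)
      have := hN (2 * Nat.pair s N) hb
      simpa [coord, Nat.mul_div_cancel_left, Nat.mul_mod_right] using this
    · rw [e0_def]
      refine ⟨N, fun r hr => ?_⟩
      have := hN (2 * r + 1) (by omega)
      have h1 : (2 * r + 1) % 2 ≠ 0 := by omega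
      have h2 : (2 * r + 1) / 2 = r := by omega
      simpa [coord, h1, h2] using this
  · rintro ⟨hEX, hEV⟩
    obtain ⟨N, hN⟩ := e0_def.1 hEV
    rw [e0_def]
    refine ⟨2 * N + 1, fun b hb => ?_⟩
    by_cases hb2 : b % 2 = 0
    · simp [coord, hb2, hEX]
    · have : b / 2 ≥ N := by omega
      simp [coord, hb2, hN _ this]

/-- unary coding of an ℕ-sequence into a point, turning eventual equality into E0. -/
def unary (g : ℕ → ℕ) : Pt := fun r => cb ((Nat.unpair r).2 < g (Nat.unpair r).1)

lemma unary_e0_iff {g h : ℕ → ℕ} :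
    E0 (unary g) (unary h) ↔ ∃ M, ∀ m ≥ M, g m = h m := by
  constructor
  · intro he
    obtain ⟨R, hR⟩ := e0_def.1 he
    refine ⟨R, fun m hm => ?_⟩
    by_contra hne
    have hr : Nat.pair m (min (g m) (h m)) ≥ R :=
      le_trans hm (Nat.left_le_pair m _)
    have := hR _ hr
    simp only [unary, Nat.unpair_pair] at this
    rw [cb_eq_cb_iff] at this
    rcases Nat.lt_or_ge (g m) (h m) with hlt | hge
    · rw [min_eq_left hlt.le] at this; omega
    · have hlt : h m < g m := by omega
      rw [min_eq_right hlt.le] at this; omega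
  · rintro ⟨M, hM⟩
    set B := 1 + (Finset.range M).sup (fun m => max (g m) (h m)) with hB
    refine e0_of_unpair M B fun r hr => ?_
    rcases hr with hr | hr
    · simp only [unary]; rw [hM _ hr]
    · by_cases hm : M ≤ (Nat.unpair r).1
      · simp only [unary]; rw [hM _ hm]
      · push_neg at hm
        have hle : max (g (Nat.unpair r).1) (h (Nat.unpair r).1) ≤
            (Finset.range M).sup (fun m => max (g m) (h m)) :=
          Finset.le_sup (f := fun m => max (g m) (h m)) (Finset.mem_range.2 hm)
        have hg := le_max_left (g (Nat.unpair r).1) (h (Nat.unpair r).1)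
        have hh := le_max_right (g (Nat.unpair r).1) (h (Nat.unpair r).1)
        have h1 : ¬ ((Nat.unpair r).2 < g (Nat.unpair r).1) := by omega
        have h2 : ¬ ((Nat.unpair r).2 < h (Nat.unpair r).1) := by omega
        simp only [unary, cb, if_neg h1, if_neg h2]

end E0Red

noncomputable section
namespace E0Red

open Filter Classical

attribute [local instance] Classical.propDecidable

/-- window of length `L` starting at coordinate `n`. -/
def window (L : ℕ) (x : Cfg) (n : ℤ) : Pt := fun r =>
  cb ((Nat.unpair r).1 < L ∧ x (n + (Nat.unpair r).1) (Nat.unpair r).2 = true)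

lemma window_e0_iff {L : ℕ} (hL : 0 < L) {x y : Cfg} {m n : ℤ} :
    E0 (window L x m) (window L y n) ↔
      ∀ i : ℕ, i < L → E0 (x (m + i)) (y (n + i)) := by
  constructor
  · intro h i hi
    obtain ⟨R, hR⟩ := e0_def.1 h
    rw [e0_def]
    refine ⟨R, fun j hj => ?_⟩
    have hr : Nat.pair i j ≥ R := le_trans hj (Nat.right_le_pair i j)
    have := hR _ hr
    simp only [window, Nat.unpair_pair] at this
    rw [cb_eq_cb_iff] at this
    apply bool_of_iff
    constructor
    · intro hx; exact (this.1 ⟨hi, hx⟩).2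
    · intro hy; exact (this.2 ⟨hi, hy⟩).2
  · intro h
    have hall : ∀ᶠ j in atTop, ∀ i ∈ Finset.range L, x (m + i) j = y (n + i) j := by
      rw [Filter.eventually_all_finset]
      intro i hi
      exact h i (Finset.mem_range.1 hi)
    obtain ⟨N, hN⟩ := eventually_atTop.1 hall
    refine e0_of_unpair L N fun r hr => ?_
    rcases hr with hr | hr
    · simp only [window]
      apply cb_congr
      constructor
      · rintro ⟨h1, _⟩; omega
      · rintro ⟨h1, _⟩; omega
    · simp only [window]
      apply cb_congr
      by_cases hiL : (Nat.unpair r).1 < L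
      · rw [hN _ hr _ (Finset.mem_range.2 hiL)]
      · constructor
        · rintro ⟨h1, _⟩; omega
        · rintro ⟨h1, _⟩; omega

/-! ### Periodicity notions -/

/-- `x` is coordinatewise-E0 periodic with period `d`. -/
def ConfPer (d : ℤ) (x : Cfg) : Prop := ∀ n : ℤ, E0 (x n) (x (n + d))

def isPer (x : Cfg) : Prop := ∃ p : ℕ, 0 < p ∧ ConfPer p x

def pmin (x : Cfg) : ℕ := if h : isPer x then Nat.find h else 0

lemma pmin_pos {x : Cfg} (h : isPer x) : 0 < pmin x := by
  rw [pmin, dif_pos h]; exact (Nat.find_spec h).1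

lemma pmin_spec {x : Cfg} (h : isPer x) : ConfPer (pmin x) x := by
  rw [pmin, dif_pos h]; exact (Nat.find_spec h).2

lemma pmin_min {x : Cfg} (h : isPer x) {k : ℕ} (h1 : 0 < k) (h2 : k < pmin x) :
    ¬ ConfPer k x := by
  rw [pmin, dif_pos h] at h2
  intro hc
  exact Nat.find_min h h2 ⟨h1, hc⟩

lemma confPer_iterate {d : ℤ} {x : Cfg} (h : ConfPer d x) (t : ℤ) :
    ∀ n : ℤ, E0 (x n) (x (n + t * d)) := by
  induction t using Int.induction_on with
  | zero => intro n; simpa using e0_refl (x n)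
  | succ t ih =>
    intro n
    have h1 := ih n
    have h2 := h (n + t * d)
    have harg : n + t * d + d = n + (t + 1) * d := by ring
    rw [harg] at h2
    exact e0_trans h1 h2
  | pred t ih =>
    intro n
    have h1 := ih n
    have h2 := h (n + (-t - 1) * d)
    have harg : n + (-t - 1) * d + d = n + (-t) * d := by ring
    rw [harg] at h2
    exact e0_trans (e0_trans h1 (e0_symm h2)) (by rw [show n + (-t-1)*d = n + (-↑t - 1) * d by ring]; exact e0_refl _)

lemma confPer_congr {p : ℕ} (hp : 0 < p) {x : Cfg} (h : ConfPer p x) {a b : ℤ}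
    (hab : a % p = b % p) : E0 (x a) (x b) := by
  have ha : E0 (x a) (x (a % p)) := by
    have := confPer_iterate h (-(a / p)) a
    have harg : a + -(a / ↑p) * ↑p = a % ↑p := by
      rw [Int.emod_def]; ring
    rwa [harg] at this
  have hb : E0 (x b) (x (b % p)) := by
    have := confPer_iterate h (-(b / p)) b
    have harg : b + -(b / ↑p) * ↑p = b % ↑p := by
      rw [Int.emod_def]; ring
    rwa [harg] at this
  rw [hab] at ha
  exact e0_trans ha (e0_symm hb)

/-- pattern periodicity: the class-equality pattern is invariant under shifting by d. -/
def PatPer (d : ℤ) (x : Cfg) : Prop :=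
  ∀ i j : ℤ, E0 (x i) (x j) ↔ E0 (x (i + d)) (x (j + d))

def hasPat (x : Cfg) : Prop := ∃ p : ℕ, 0 < p ∧ PatPer p x

def dpat (x : Cfg) : ℕ := if h : hasPat x then Nat.find h else 0

lemma dpat_pos {x : Cfg} (h : hasPat x) : 0 < dpat x := by
  rw [dpat, dif_pos h]; exact (Nat.find_spec h).1

lemma dpat_spec {x : Cfg} (h : hasPat x) : PatPer (dpat x) x := by
  rw [dpat, dif_pos h]; exact (Nat.find_spec h).2

lemma dpat_min {x : Cfg} (h : hasPat x) {k : ℕ} (h1 : 0 < k) (h2 : k < dpat x) :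
    ¬ PatPer k x := by
  rw [dpat, dif_pos h] at h2
  intro hc
  exact Nat.find_min h h2 ⟨h1, hc⟩

lemma patPer_neg {d : ℤ} {x : Cfg} (h : PatPer d x) : PatPer (-d) x := by
  intro i j
  have := h (i - d) (j - d)
  simp only [sub_add_cancel] at this
  rw [← this]
  constructor
  · intro h2; rwa [show i + -d = i - d by ring, show j + -d = j - d by ring]
  · intro h2; rwa [show i - d = i + -d by ring, show j - d = j + -d by ring]

lemma patPer_add {d e : ℤ} {x : Cfg} (hd : PatPer d x) (he : PatPer e x) :
    PatPer (d + e) x := by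
  intro i j
  rw [hd i j, he (i + d) (j + d)]
  constructor
  · intro h; rwa [show i + d + e = i + (d + e) by ring, show j + d + e = j + (d+e) by ring] at h
  · intro h; rwa [show i + (d + e) = i + d + e by ring, show j + (d+e) = j + d + e by ring] at h

lemma patPer_zero {x : Cfg} : PatPer 0 x := by
  intro i j; simp

lemma patPer_iterate {d : ℤ} {x : Cfg} (h : PatPer d x) (t : ℤ) : PatPer (t * d) x := by
  induction t using Int.induction_on with
  | zero => simpa using patPer_zero
  | succ t ih =>
    have := patPer_add ih h
    rwa [show t * d + d = (t + 1) * d by ring] at this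
  | pred t ih =>
    have := patPer_add ih (patPer_neg h)
    rwa [show -t * d + -d = (-t - 1) * d by ring] at this

lemma patPer_dvd {x : Cfg} (h : hasPat x) {e : ℤ} (he : PatPer e x) :
    (dpat x : ℤ) ∣ e := by
  set d := dpat x with hd
  have hdpos : 0 < d := dpat_pos h
  have hr : e % d = e - d * (e / d) := by rw [Int.emod_def]
  have h1 : PatPer (e % d) x := by
    rw [hr]
    have := patPer_add he (patPer_iterate (dpat_spec h) (-(e / d)))
    rwa [show e + -(e/↑d) * ↑d = e - ↑d * (e / ↑d) by ring] at this
  have hnonneg : 0 ≤ e % d := Int.emod_nonneg e (by exact_mod_cast hdpos.ne')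
  have hlt : e % d < d := Int.emod_lt_of_pos e (by exact_mod_cast hdpos)
  by_contra hndvd
  have hne : e % d ≠ 0 := fun h0 => hndvd (Int.dvd_of_emod_eq_zero h0)
  have hpos : 0 < (e % d).toNat := by omega
  have hlt2 : (e % d).toNat < d := by omega
  apply dpat_min h hpos hlt2
  have : ((e % ↑d).toNat : ℤ) = e % d := by omega
  rwa [← this] at h1

/-! ### the relation and transfer lemmas -/

/-- the ℤ-jump relation in additive form. -/
def Rel (x y : Cfg) : Prop := ∃ γ : ℤ, ∀ a : ℤ, E0 (x (a - γ)) (y a)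

lemma rel_refl (x : Cfg) : Rel x x := ⟨0, fun a => by simpa using e0_refl (x a)⟩

lemma rel_e0_iff {x y : Cfg} {γ : ℤ} (h : ∀ a : ℤ, E0 (x (a - γ)) (y a))
    {i j : ℤ} : E0 (y i) (y j) ↔ E0 (x (i - γ)) (x (j - γ)) := by
  constructor
  · intro h2
    exact e0_trans (e0_trans (h i) h2) (e0_symm (h j))
  · intro h2
    exact e0_trans (e0_trans (e0_symm (h i)) h2) (h j)

lemma rel_confPer {x y : Cfg} {γ : ℤ} (h : ∀ a : ℤ, E0 (x (a - γ)) (y a))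
    {d : ℤ} (hx : ConfPer d x) : ConfPer d y := by
  intro n
  have h1 : E0 (y n) (x (n - γ)) := e0_symm (h n)
  have h2 : E0 (x (n - γ)) (x (n - γ + d)) := hx (n - γ)
  have h3 : E0 (x (n + d - γ)) (y (n + d)) := h (n + d)
  rw [show n - γ + d = n + d - γ by ring] at h2
  exact e0_trans (e0_trans h1 h2) h3

lemma rel_patPer {x y : Cfg} {γ : ℤ} (h : ∀ a : ℤ, E0 (x (a - γ)) (y a))
    {d : ℤ} (hx : PatPer d x) : PatPer d y := by
  intro i j
  rw [rel_e0_iff h, rel_e0_iff h, hx (i - γ) (j - γ),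
    show i - γ + d = i + d - γ by ring, show j - γ + d = j + d - γ by ring]

lemma rel_symm {x y : Cfg} (h : Rel x y) : Rel y x := by
  obtain ⟨γ, hγ⟩ := h
  refine ⟨-γ, fun a => ?_⟩
  have := hγ (a + γ)
  rw [show a + γ - γ = a by ring] at this
  rw [show a - -γ = a + γ by ring]
  exact e0_symm this

lemma rel_isPer_iff {x y : Cfg} (h : Rel x y) : (isPer x ↔ isPer y) := by
  obtain ⟨γ, hγ⟩ := h
  obtain ⟨δ, hδ⟩ := rel_symm ⟨γ, hγ⟩
  constructor
  · rintro ⟨p, hp, hc⟩; exact ⟨p, hp, rel_confPer hγ hc⟩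
  · rintro ⟨p, hp, hc⟩; exact ⟨p, hp, rel_confPer hδ hc⟩

lemma rel_pmin_eq {x y : Cfg} (h : Rel x y) : pmin x = pmin y := by
  obtain ⟨γ, hγ⟩ := h
  obtain ⟨δ, hδ⟩ := rel_symm ⟨γ, hγ⟩
  have hiff : ∀ d : ℤ, ConfPer d x ↔ ConfPer d y :=
    fun d => ⟨rel_confPer hγ, rel_confPer hδ⟩
  by_cases hx : isPer x
  · have hy : isPer y := (rel_isPer_iff ⟨γ, hγ⟩).1 hx
    rw [pmin, pmin, dif_pos hx, dif_pos hy]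
    congr 1
    · ext p; rw [and_congr_right_iff]; intro _; exact hiff p
  · have hy : ¬ isPer y := fun hy => hx ((rel_isPer_iff ⟨γ, hγ⟩).2 hy)
    rw [pmin, pmin, dif_neg hx, dif_neg hy]

lemma rel_hasPat_iff {x y : Cfg} (h : Rel x y) : (hasPat x ↔ hasPat y) := by
  obtain ⟨γ, hγ⟩ := h
  obtain ⟨δ, hδ⟩ := rel_symm ⟨γ, hγ⟩
  constructor
  · rintro ⟨p, hp, hc⟩; exact ⟨p, hp, rel_patPer hγ hc⟩
  · rintro ⟨p, hp, hc⟩; exact ⟨p, hp, rel_patPer hδ hc⟩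

lemma rel_dpat_eq {x y : Cfg} (h : Rel x y) : dpat x = dpat y := by
  obtain ⟨γ, hγ⟩ := h
  obtain ⟨δ, hδ⟩ := rel_symm ⟨γ, hγ⟩
  have hiff : ∀ d : ℤ, PatPer d x ↔ PatPer d y :=
    fun d => ⟨rel_patPer hγ, rel_patPer hδ⟩
  by_cases hx : hasPat x
  · have hy : hasPat y := (rel_hasPat_iff ⟨γ, hγ⟩).1 hx
    rw [dpat, dpat, dif_pos hx, dif_pos hy]
    congr 1
    · ext p; rw [and_congr_right_iff]; intro _; exact hiff p
  · have hy : ¬ hasPat y := fun hy => hx ((rel_hasPat_iff ⟨γ, hγ⟩).2 hy)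
    rw [dpat, dpat, dif_neg hx, dif_neg hy]

end E0Red

noncomputable section
namespace E0Red

open Filter Classical

attribute [local instance] Classical.propDecidable

/-- Core separation lemma for the aperiodic sector: pattern tag equality plus
window equivalence forces configuration periodicity. -/
lemma aper_core {x : Cfg} (hx : ¬ isPer x) {m n : ℤ} (hmn : m ≠ n)
    (hpat : PatPer (n - m) x)
    (hwin : ∀ i : ℕ, i < max (dpat x) 1 → E0 (x (m + i)) (x (n + i))) : False := by
  set e := n - m with he
  have hene : e ≠ 0 := sub_ne_zero.2 (Ne.symm hmn)
  have hhp : hasPat x := by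
    rcases lt_or_gt_of_ne hene with hlt | hgt
    · refine ⟨(-e).toNat, by omega, ?_⟩
      have h2 := patPer_neg hpat
      rwa [show ((-e).toNat : ℤ) = -e by omega]
    · refine ⟨e.toNat, by omega, ?_⟩
      have h2 := hpat
      rwa [show (e.toNat : ℤ) = e by omega]
  set d := dpat x with hd
  have hdpos : 0 < d := dpat_pos hhp
  have hall : ∀ r : ℤ, E0 (x r) (x (r + e)) := by
    intro r
    obtain ⟨t, i, hid, hige, hilt⟩ : ∃ t i : ℤ, r - m = t * (d:ℤ) + i ∧ 0 ≤ i ∧ i < d := by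
      refine ⟨(r - m) / d, (r - m) % d, ?_,
        Int.emod_nonneg _ (by exact_mod_cast hdpos.ne'),
        Int.emod_lt_of_pos _ (by exact_mod_cast hdpos)⟩
      rw [mul_comm]
      exact (Int.mul_ediv_add_emod (r - m) d).symm
    have hitn : i.toNat < max d 1 := by omega
    have hw := hwin i.toNat hitn
    rw [show (i.toNat : ℤ) = i by omega] at hw
    have hit := patPer_iterate (dpat_spec hhp) t
    rw [← hd] at hit
    have h2 := (hit (m + i) (n + i)).1 hw
    set D := t * (d:ℤ) with hDD
    have e1 : m + i + D = r := by omega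
    have e2 : n + i + D = r + e := by omega
    rw [e1, e2] at h2
    exact h2
  apply hx
  rcases lt_or_gt_of_ne hene with hlt | hgt
  · refine ⟨(-e).toNat, by omega, fun a => ?_⟩
    have h1 := e0_symm (hall (a - e))
    rw [show a - e + e = a by ring] at h1
    rw [show a + ((-e).toNat : ℤ) = a - e by omega]
    exact h1
  · refine ⟨e.toNat, by omega, fun a => ?_⟩
    have h1 := hall a
    rwa [show ((e.toNat : ℤ)) = e by omega]

end E0Red

noncomputable section
namespace E0Red

open Filter Classical

attribute [local instance] Classical.propDecidable

/-! ### Periodic sector machinery -/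

/-- the m-th column of the period-p block of x. -/
def Col (x : Cfg) (p : ℕ) (m : ℕ) : List Bool := (List.range p).map (fun (r : ℕ) => x (↑r) m)

def Tk (x : Cfg) (p k m : ℕ) : Prop := (Col x p m).rotate k ≠ Col x p m

/-- least position ≥ m where the column is moved by rotation k. -/
def tkf (x : Cfg) (p k m : ℕ) : ℕ :=
  m + (if h : ∃ i, Tk x p k (m + i) then Nat.find h else 0)

def tauf (x : Cfg) (p m i : ℕ) : List Bool :=
  if i = 0 then Col x p m
  else if i ≤ p - 1 then Col x p (tkf x p i m)
  else Col x p (tkf x p (i - (p - 1)) (m + 1))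

def tau (x : Cfg) (p m : ℕ) : List (List Bool) :=
  (List.range (2 * p - 1)).map (tauf x p m)

def rotAll (k : ℕ) (L : List (List Bool)) : List (List Bool) := L.map (fun l => l.rotate k)

def pureWenc (p : ℕ) (τ : List (List Bool)) : ℕ :=
  if h : 0 < p then
    ((Finset.range p).image fun k => Encodable.encode (rotAll k τ)).min'
      (Finset.Nonempty.image ⟨0, Finset.mem_range.2 h⟩ _)
  else 0

def Wenc (x : Cfg) (p m : ℕ) : ℕ := pureWenc p (tau x p m)

lemma col_length {x : Cfg} {p m : ℕ} : (Col x p m).length = p := by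
  rw [Col, List.length_map, List.length_range]

lemma col_getElem {x : Cfg} {p m r : ℕ} (h : r < p) :
    (Col x p m)[r]'(by simpa [col_length] using h) = x (r : ℤ) m := by
  simp only [Col, List.getElem_map, List.getElem_range]

lemma rotAll_rotAll {j k : ℕ} {L : List (List Bool)} :
    rotAll j (rotAll k L) = rotAll (k + j) L := by
  simp only [rotAll, List.map_map]
  apply List.map_congr_left
  intro l _
  simp [Function.comp, List.rotate_rotate]

lemma rotAll_zero {L : List (List Bool)} : rotAll 0 L = L := by
  simp [rotAll, List.rotate_zero]

lemma rotAll_mod {p j : ℕ} {L : List (List Bool)} (hL : ∀ l ∈ L, l.length = p) :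
    rotAll (j % p) L = rotAll j L := by
  apply List.map_congr_left
  intro l hl
  rw [← hL l hl]
  exact List.rotate_mod l j

lemma tau_length {x : Cfg} {p m : ℕ} : (tau x p m).length = 2 * p - 1 := by
  simp [tau]

lemma tau_mem_length {x : Cfg} {p m : ℕ} : ∀ l ∈ tau x p m, l.length = p := by
  intro l hl
  simp only [tau, List.mem_map] at hl
  obtain ⟨i, _, rfl⟩ := hl
  by_cases h0 : i = 0
  · simp [tauf, h0, col_length]
  · by_cases h1 : i ≤ p - 1 <;> simp [tauf, h0, h1, col_length]

lemma tau_getElem {x : Cfg} {p m i : ℕ} (h : i < 2 * p - 1) :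
    (tau x p m)[i]'(by simpa [tau_length] using h) = tauf x p m i := by
  simp [tau]

lemma rotAll_getElem {k : ℕ} {L : List (List Bool)} {i : ℕ} (h : i < L.length) :
    (rotAll k L)[i]'(by simpa [rotAll] using h) = (L[i]'h).rotate k := by
  simp [rotAll]

lemma rotAll_length {k : ℕ} {L : List (List Bool)} : (rotAll k L).length = L.length := by
  simp [rotAll]

/-- cancellation: from rotAll a τ = rotAll b τ (components length p) get τ = rotAll e τ
with e := (b + (p - a % p)) % p -- we only need the instantiated versions below. -/
lemma rotAll_cancel {p a b : ℕ} (ha : a < p) (hb : b < p) {L : List (List Bool)}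
    (hL : ∀ l ∈ L, l.length = p) (h : rotAll a L = rotAll b L) :
    rotAll ((a + (p - b)) % p) L = L := by
  have hp : 0 < p := by omega
  have h2 : rotAll (p - b) (rotAll a L) = rotAll (p - b) (rotAll b L) := by rw [h]
  rw [rotAll_rotAll, rotAll_rotAll] at h2
  have h3 : b + (p - b) = p := by omega
  rw [h3] at h2
  have h4 : rotAll p L = L := by
    have := rotAll_mod (j := p) hL
    rw [Nat.mod_self] at this
    rw [← this, rotAll_zero]
  rw [h4] at h2
  rw [rotAll_mod hL, h2]

end E0Red

noncomputable section
namespace E0Red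

open Filter Classical

attribute [local instance] Classical.propDecidable

lemma min'_eq_of_eq {s t : Finset ℕ} (h : s = t) (hs : s.Nonempty) :
    s.min' hs = t.min' (h ▸ hs) := by subst h; rfl

lemma col_rotate_getElem {x : Cfg} {p m k r : ℕ} (hr : r < p) :
    ((Col x p m).rotate k)[r]'(by rw [List.length_rotate, col_length]; exact hr)
      = x (((r + k) % p : ℕ) : ℤ) m := by
  rw [List.getElem_rotate]
  have hlen : (Col x p m).length = p := col_length
  simp_rw [hlen]
  exact col_getElem (Nat.mod_lt _ (by omega))

lemma col_rel_iff {x y : Cfg} {p k m : ℕ} :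
    Col y p m = (Col x p m).rotate k ↔
      ∀ r : ℕ, r < p → y (r : ℤ) m = x (((r + k) % p : ℕ) : ℤ) m := by
  constructor
  · intro h r hr
    have h1 : (Col y p m)[r]'(by rw [col_length]; exact hr) =
        ((Col x p m).rotate k)[r]'(by rw [List.length_rotate, col_length]; exact hr) := by
      simp only [h]
    rw [col_getElem hr, col_rotate_getElem hr] at h1
    exact h1
  · intro h
    apply List.ext_getElem
    · rw [col_length, List.length_rotate, col_length]
    · intro r h1 h2
      have hr : r < p := by rwa [col_length] at h1
      rw [col_getElem hr, col_rotate_getElem hr]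
      exact h r hr

/-- congruence along a period via divisibility. -/
lemma confPer_dvd {p : ℕ} (hp : 0 < p) {x : Cfg} (h : ConfPer (p : ℤ) x) {a b : ℤ}
    (hab : (p : ℤ) ∣ (b - a)) : E0 (x a) (x b) := by
  obtain ⟨t, ht⟩ := hab
  have h2 := confPer_iterate h t a
  rwa [show a + t * (p : ℤ) = b by linear_combination -ht] at h2

/-- In the sector with minimal period p, every rotation 0<k<p moves infinitely many columns. -/
lemma Tk_exists {x : Cfg} (hP : isPer x) {p : ℕ} (hp : pmin x = p) {k : ℕ}
    (hk : 0 < k) (hkp : k < p) : ∀ m : ℕ, ∃ i, Tk x p k (m + i) := by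
  have hppos : 0 < p := hp ▸ pmin_pos hP
  have hconf : ConfPer (p : ℤ) x := by
    have := pmin_spec hP; rwa [hp] at this
  have hnc : ¬ ConfPer (k : ℤ) x := pmin_min hP hk (by omega : k < pmin x)
  obtain ⟨n, hn⟩ : ∃ n : ℤ, ¬ E0 (x n) (x (n + k)) := by
    by_contra hc; push_neg at hc; exact hnc hc
  have hfreq : ∀ N : ℕ, ∃ j ≥ N, x n j ≠ x (n + k) j := by
    intro N
    by_contra hc
    push_neg at hc
    exact hn (e0_def.2 ⟨N, hc⟩)
  set r : ℕ := (n % p).toNat with hrdef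
  have hrn : (r : ℤ) = n % p := by
    have h1 := Int.emod_nonneg n (show (p:ℤ) ≠ 0 by exact_mod_cast hppos.ne')
    omega
  have hrlt : r < p := by
    have h2 := Int.emod_lt_of_pos n (show (0:ℤ) < p by exact_mod_cast hppos)
    omega
  set s : ℕ := (r + k) % p with hsdef
  have d2 : (p : ℤ) ∣ ((r : ℤ) - n) := ⟨-(n / p), by rw [hrn, Int.emod_def]; ring⟩
  have h1 : E0 (x n) (x (r : ℤ)) := confPer_dvd hppos hconf d2
  have h2 : E0 (x (n + k)) (x (s : ℤ)) := by
    apply confPer_dvd hppos hconf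
    have hnat := Nat.div_add_mod (r + k) p
    have hz : (p : ℤ) * (((r + k) / p : ℕ) : ℤ) + (s : ℤ) = (r : ℤ) + k := by
      exact_mod_cast hnat
    have d1 : (p : ℤ) ∣ ((s : ℤ) - ((r : ℤ) + k)) :=
      ⟨-((((r + k) / p : ℕ)) : ℤ), by linear_combination hz⟩
    have heq : (s : ℤ) - (n + k) = ((s : ℤ) - ((r : ℤ) + k)) + ((r : ℤ) - n) := by ring
    rw [heq]
    exact dvd_add d1 d2
  intro m
  obtain ⟨N1, hN1⟩ := e0_def.1 h1
  obtain ⟨N2, hN2⟩ := e0_def.1 h2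
  obtain ⟨j, hj, hne⟩ := hfreq (max m (max N1 N2))
  refine ⟨j - m, ?_⟩
  have hjm : m + (j - m) = j := by omega
  rw [hjm]
  intro hEq
  have hcols := col_rel_iff.1 hEq.symm r hrlt
  have hxr : x n j = x (r : ℤ) j := hN1 j (by omega)
  have hxs : x (n + k) j = x (s : ℤ) j := hN2 j (by omega)
  apply hne
  rw [hxr, hxs, hsdef]
  exact hcols

lemma tkf_spec {x : Cfg} {p k m : ℕ} (hex : ∃ i, Tk x p k (m + i)) :
    Tk x p k (tkf x p k m) ∧ m ≤ tkf x p k m := by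
  rw [tkf, dif_pos hex]
  exact ⟨Nat.find_spec hex, by omega⟩

/-- single-list rotation cancellation -/
lemma rot_cancel_single {p a b : ℕ} (hb : b < p) {l : List Bool}
    (hl : l.length = p) (h : l.rotate a = l.rotate b) :
    l.rotate ((a + (p - b)) % p) = l := by
  have h2 : (l.rotate a).rotate (p - b) = (l.rotate b).rotate (p - b) := by rw [h]
  rw [List.rotate_rotate, List.rotate_rotate] at h2
  have h3 : b + (p - b) = p := by omega
  have h4 : l.rotate p = l := by rw [← hl]; exact List.rotate_length l
  rw [h3, h4] at h2
  have h5 := List.rotate_mod l (a + (p - b))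
  rw [hl] at h5
  rw [h5, h2]

lemma rot_neq_zero {p a b : ℕ} (ha : a < p) (hb : b < p) (hne : a ≠ b) :
    (a + (p - b)) % p ≠ 0 ∧ (a + (p - b)) % p < p := by
  refine ⟨?_, Nat.mod_lt _ (by omega)⟩
  intro h0
  obtain ⟨c, hc⟩ := Nat.dvd_of_mod_eq_zero h0
  rcases Nat.lt_or_ge c 2 with hc2 | hc2
  · interval_cases c <;> omega
  · have h5 : p * 2 ≤ p * c := Nat.mul_le_mul_left p hc2
    omega

end E0Red

noncomputable section
namespace E0Red

open Filter Classical

attribute [local instance] Classical.propDecidable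

lemma tkf_ge {x : Cfg} {p k m : ℕ} : m ≤ tkf x p k m := by
  rw [tkf]; omega

lemma nat_find_eq {P Q : ℕ → Prop} (hP : ∃ i, P i) (hQ : ∃ i, Q i)
    (h : ∀ i, P i ↔ Q i) : Nat.find hP = Nat.find hQ :=
  le_antisymm (Nat.find_min' hP ((h _).2 (Nat.find_spec hQ)))
    (Nat.find_min' hQ ((h _).1 (Nat.find_spec hP)))

lemma colRel_T {x y : Cfg} {p k : ℕ} {M : ℕ}
    (h : ∀ c ≥ M, Col y p c = (Col x p c).rotate k) :
    ∀ j c, c ≥ M → (Tk y p j c ↔ Tk x p j c) := by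
  intro j c hc
  rw [Tk, Tk, h c hc, List.rotate_rotate, Nat.add_comm k j, ← List.rotate_rotate]
  exact not_congr ⟨fun h2 => List.rotate_eq_rotate.1 h2, fun h2 => by rw [h2]⟩

lemma colRel_tkf {x y : Cfg} {p k : ℕ} {M : ℕ}
    (h : ∀ c ≥ M, Col y p c = (Col x p c).rotate k) :
    ∀ j c, c ≥ M → tkf y p j c = tkf x p j c := by
  intro j c hc
  have hiff : ∀ i, Tk y p j (c + i) ↔ Tk x p j (c + i) :=
    fun i => colRel_T h j (c + i) (by omega)
  rw [tkf, tkf]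
  by_cases he : ∃ i, Tk y p j (c + i)
  · have he2 : ∃ i, Tk x p j (c + i) := by
      obtain ⟨i, hi⟩ := he; exact ⟨i, (hiff i).1 hi⟩
    rw [dif_pos he, dif_pos he2]
    congr 1
    exact nat_find_eq he he2 hiff
  · have he2 : ¬ ∃ i, Tk x p j (c + i) := by
      intro hx; exact he (by obtain ⟨i, hi⟩ := hx; exact ⟨i, (hiff i).2 hi⟩)
    rw [dif_neg he, dif_neg he2]

lemma colRel_tau {x y : Cfg} {p k : ℕ} {M : ℕ}
    (h : ∀ c ≥ M, Col y p c = (Col x p c).rotate k) :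
    ∀ c ≥ M, tau y p c = rotAll k (tau x p c) := by
  intro c hc
  apply List.ext_getElem
  · rw [tau_length, rotAll_length, tau_length]
  · intro i h1 h2
    have hi : i < 2 * p - 1 := by rwa [tau_length] at h1
    rw [tau_getElem hi, rotAll_getElem (by rw [tau_length]; exact hi), tau_getElem hi]
    by_cases h0 : i = 0
    · rw [tauf, tauf, if_pos h0, if_pos h0]
      exact h c hc
    · by_cases hle : i ≤ p - 1
      · rw [tauf, tauf, if_neg h0, if_neg h0, if_pos hle, if_pos hle,
          colRel_tkf h i c hc]
        exact h _ (le_trans hc tkf_ge)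
      · rw [tauf, tauf, if_neg h0, if_neg h0, if_neg hle, if_neg hle,
          colRel_tkf h (i - (p - 1)) (c + 1) (by omega)]
        exact h _ (le_trans (by omega : M ≤ c + 1) tkf_ge)

lemma image_rotAll_eq {p k : ℕ} (hp : 0 < p) (hk : k < p) {τ : List (List Bool)}
    (hτ : ∀ l ∈ τ, l.length = p) :
    ((Finset.range p).image fun k' => Encodable.encode (rotAll k' (rotAll k τ)))
      = (Finset.range p).image fun j => Encodable.encode (rotAll j τ) := by
  apply Finset.ext; intro a
  simp only [Finset.mem_image, Finset.mem_range]
  constructor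
  · rintro ⟨k', hk', rfl⟩
    refine ⟨(k + k') % p, Nat.mod_lt _ hp, ?_⟩
    rw [rotAll_rotAll, rotAll_mod hτ]
  · rintro ⟨j, hj, rfl⟩
    refine ⟨(j + (p - k)) % p, Nat.mod_lt _ hp, ?_⟩
    have hm : (k + (j + (p - k)) % p) % p = j := by
      rw [Nat.add_mod_mod, show k + (j + (p - k)) = j + p by omega,
        Nat.add_mod_right, Nat.mod_eq_of_lt hj]
    rw [rotAll_rotAll, ← rotAll_mod hτ (j := k + (j + (p - k)) % p), hm]

lemma per_forward {x y : Cfg} {p : ℕ} (hp : 0 < p) {γ : ℤ}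
    (hconfx : ConfPer (p : ℤ) x) (hγ : ∀ a : ℤ, E0 (x (a - γ)) (y a)) :
    ∃ M, ∀ c ≥ M, Wenc x p c = Wenc y p c := by
  set k : ℕ := ((-γ) % p).toNat with hk
  have hkz : (k : ℤ) = (-γ) % p := by
    have := Int.emod_nonneg (-γ) (show (p:ℤ) ≠ 0 by exact_mod_cast hp.ne'); omega
  have hklt : k < p := by
    have := Int.emod_lt_of_pos (-γ) (show (0:ℤ) < p by exact_mod_cast hp); omega
  have hcol : ∀ r : ℕ, r < p → E0 (y (r : ℤ)) (x (((r + k) % p : ℕ) : ℤ)) := by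
    intro r hr
    have h1 : E0 (y (r : ℤ)) (x ((r : ℤ) - γ)) := e0_symm (hγ (r : ℤ))
    have h2 : E0 (x ((r : ℤ) - γ)) (x (((r + k) % p : ℕ) : ℤ)) := by
      apply confPer_dvd hp hconfx
      have hnat := Nat.div_add_mod (r + k) p
      have hz : (p : ℤ) * (((r + k) / p : ℕ) : ℤ) + (((r + k) % p : ℕ) : ℤ)
          = (r : ℤ) + k := by exact_mod_cast hnat
      have hg : (-γ) % (p : ℤ) = -γ - (p : ℤ) * ((-γ) / (p : ℤ)) := Int.emod_def _ _
      refine ⟨-((((r + k) / p : ℕ)) : ℤ) - ((-γ) / (p : ℤ)), ?_⟩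
      linear_combination hz + hg + hkz
    exact e0_trans h1 h2
  have hall : ∀ᶠ c in atTop, ∀ r ∈ Finset.range p,
      y (r : ℤ) c = x (((r + k) % p : ℕ) : ℤ) c := by
    rw [Filter.eventually_all_finset]
    intro r hr
    exact hcol r (Finset.mem_range.1 hr)
  obtain ⟨M, hM⟩ := eventually_atTop.1 hall
  have hcolc : ∀ c ≥ M, Col y p c = (Col x p c).rotate k := fun c hc =>
    col_rel_iff.2 (fun r hr => hM c hc r (Finset.mem_range.2 hr))
  refine ⟨M, fun c hc => ?_⟩
  have htau := colRel_tau hcolc c hc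
  rw [Wenc, Wenc, htau, pureWenc, pureWenc, dif_pos hp, dif_pos hp]
  exact (min'_eq_of_eq (image_rotAll_eq hp hklt (tau_mem_length)) _).symm

lemma tau_eq_component {x y : Cfg} {p c κ i : ℕ}
    (h : tau y p c = rotAll κ (tau x p c)) (hi : i < 2 * p - 1) :
    tauf y p c i = (tauf x p c i).rotate κ := by
  have h1 : (tau y p c)[i]'(by rw [tau_length]; exact hi)
      = (rotAll κ (tau x p c))[i]'(by rw [rotAll_length, tau_length]; exact hi) := by
    simp only [h]
  rwa [tau_getElem hi, rotAll_getElem (by rw [tau_length]; exact hi), tau_getElem hi] at h1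

lemma per_complete {x y : Cfg} (hx : isPer x) (hy : isPer y) {p : ℕ}
    (hpx : pmin x = p) (hpy : pmin y = p) {M : ℕ}
    (hW : ∀ c ≥ M, Wenc x p c = Wenc y p c) : Rel x y := by
  have hp : 0 < p := hpx ▸ pmin_pos hx
  have hxper : ConfPer (p : ℤ) x := by have := pmin_spec hx; rwa [hpx] at this
  have hyper : ConfPer (p : ℤ) y := by have := pmin_spec hy; rwa [hpy] at this
  -- existence of a rotation aligning the tau tuples
  have hex' : ∀ c, ∃ κ, κ < p ∧ (c ≥ M → tau y p c = rotAll κ (tau x p c)) := by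
    intro c
    by_cases hc : c ≥ M
    · have hnex : ((Finset.range p).image
          (fun k => Encodable.encode (rotAll k (tau x p c)))).Nonempty :=
        Finset.Nonempty.image ⟨0, Finset.mem_range.2 hp⟩ _
      have hney : ((Finset.range p).image
          (fun k => Encodable.encode (rotAll k (tau y p c)))).Nonempty :=
        Finset.Nonempty.image ⟨0, Finset.mem_range.2 hp⟩ _
      have hWx : Wenc x p c = Finset.min' _ hnex := by rw [Wenc, pureWenc, dif_pos hp]
      have hWy : Wenc y p c = Finset.min' _ hney := by rw [Wenc, pureWenc, dif_pos hp]
      obtain ⟨k0, hk0r, hk0e⟩ := Finset.mem_image.1 (Finset.min'_mem _ hnex)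
      obtain ⟨k1, hk1r, hk1e⟩ := Finset.mem_image.1 (Finset.min'_mem _ hney)
      rw [Finset.mem_range] at hk0r hk1r
      have henc : Encodable.encode (rotAll k0 (tau x p c))
          = Encodable.encode (rotAll k1 (tau y p c)) := by
        rw [hk0e, hk1e, ← hWx, ← hWy]
        exact hW c hc
      have heq := Encodable.encode_injective henc
      have h3 : rotAll (p - k1) (rotAll k1 (tau y p c)) = tau y p c := by
        rw [rotAll_rotAll, show k1 + (p - k1) = p by omega,
          ← rotAll_mod (tau_mem_length), Nat.mod_self, rotAll_zero]
      refine ⟨(k0 + (p - k1)) % p, Nat.mod_lt _ hp, fun _ => ?_⟩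
      rw [← h3, ← heq, rotAll_rotAll]
      exact (rotAll_mod (tau_mem_length)).symm
    · exact ⟨0, hp, fun h => absurd h hc⟩
  choose κ hκlt hκeq using hex'
  -- chain : κ is eventually constant
  have hchain : ∀ c, c ≥ M → κ c = κ (c + 1) := by
    intro c hc
    by_cases hp1 : p = 1
    · have l1 := hκlt c; have l2 := hκlt (c + 1); omega
    · by_contra hne
      obtain ⟨hez, helt⟩ := rot_neq_zero (hκlt c) (hκlt (c + 1)) hne
      set e := (κ c + (p - κ (c + 1))) % p with hedef
      have hcomp : (Col x p (tkf x p e (c + 1))).rotate (κ c)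
          = (Col x p (tkf x p e (c + 1))).rotate (κ (c + 1)) := by
        have hA := tau_eq_component (hκeq c hc) (show (p - 1) + e < 2 * p - 1 by omega)
        have hB := tau_eq_component (hκeq (c + 1) (by omega)) (show e < 2 * p - 1 by omega)
        have eA : ∀ z : Cfg, tauf z p c ((p - 1) + e) = Col z p (tkf z p e (c + 1)) := by
          intro z
          rw [tauf, if_neg (by omega), if_neg (by omega),
            show (p - 1) + e - (p - 1) = e by omega]
        have eB : ∀ z : Cfg, tauf z p (c + 1) e = Col z p (tkf z p e (c + 1)) := by
          intro z
          rw [tauf, if_neg (by omega), if_pos (by omega : e ≤ p - 1)]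
        rw [eA x, eA y] at hA
        rw [eB x, eB y] at hB
        rw [← hA, ← hB]
      have hcan := rot_cancel_single (hκlt (c + 1)) (col_length) hcomp
      exact (tkf_spec (Tk_exists hx hpx (by omega) helt (c + 1))).1 hcan
  have hconst : ∀ c, c ≥ M → κ c = κ M := by
    intro c hc
    induction c, hc using Nat.le_induction with
    | base => rfl
    | succ n hn ih => rw [← hchain n hn]; exact ih
  have hcolrel : ∀ c, c ≥ M → Col y p c = (Col x p c).rotate (κ M) := by
    intro c hc
    have h0 := tau_eq_component (hκeq c hc) (show 0 < 2 * p - 1 by omega)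
    rw [tauf, tauf, if_pos rfl, if_pos rfl, hconst c hc] at h0
    exact h0
  set K := κ M with hK
  have hKlt : K < p := hκlt M
  refine ⟨-(K : ℤ), fun a => ?_⟩
  rw [sub_neg_eq_add]
  set r : ℕ := (a % p).toNat with hr
  have hrz : (r : ℤ) = a % p := by
    have := Int.emod_nonneg a (show (p:ℤ) ≠ 0 by exact_mod_cast hp.ne'); omega
  have hrlt : r < p := by
    have := Int.emod_lt_of_pos a (show (0:ℤ) < p by exact_mod_cast hp); omega
  have h1 : E0 (y a) (y (r : ℤ)) :=
    confPer_dvd hp hyper ⟨-(a / p), by rw [hrz, Int.emod_def]; ring⟩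
  have h2 : E0 (y (r : ℤ)) (x (((r + K) % p : ℕ) : ℤ)) := by
    rw [E0, eventually_atTop]
    exact ⟨M, fun c hc => col_rel_iff.1 (hcolrel c hc) r hrlt⟩
  have h3 : E0 (x (((r + K) % p : ℕ) : ℤ)) (x (a + K)) := by
    apply confPer_dvd hp hxper
    have hnat := Nat.div_add_mod (r + K) p
    have hz : (p : ℤ) * (((r + K) / p : ℕ) : ℤ) + (((r + K) % p : ℕ) : ℤ)
        = (r : ℤ) + K := by exact_mod_cast hnat
    have hg : a % (p : ℤ) = a - (p : ℤ) * (a / (p : ℤ)) := Int.emod_def _ _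
    refine ⟨(((r + K) / p : ℕ) : ℤ) + (a / (p : ℤ)), ?_⟩
    linear_combination -hz - hg - hrz
  exact e0_symm (e0_trans (e0_trans h1 h2) h3)

end E0Red

noncomputable section
namespace E0Red

open Filter Classical

attribute [local instance] Classical.propDecidable

def intEnc (n : ℤ) : ℕ := if 0 ≤ n then 2 * n.toNat else 2 * (-n).toNat + 1

lemma intEnc_inj {m n : ℤ} (h : intEnc m = intEnc n) : m = n := by
  rw [intEnc, intEnc] at h
  by_cases h1 : 0 ≤ m <;> by_cases h2 : 0 ≤ n <;> simp [h1, h2] at h <;> omega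

def kindNat (x : Cfg) (n : ℤ) : ℕ :=
  if isPer x then (if n = 0 then Nat.pair 1 (pmin x) else Nat.pair 2 (intEnc n))
  else Nat.pair 0 (dpat x)

def patProp (x : Cfg) (n : ℤ) (c : ℕ) : Prop :=
  ¬ isPer x ∧ (Encodable.decode (α := ℤ × ℤ) c).elim False
      (fun q => E0 (x (n + q.1)) (x (n + q.2)))

def EXf (x : Cfg) (n : ℤ) : Pt := fun s =>
  if (Nat.unpair s).1 = 0 then cb ((Nat.unpair s).2 = kindNat x n)
  else if (Nat.unpair s).1 = 1 then cb (patProp x n (Nat.unpair s).2)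
  else false

def EVf (x : Cfg) (n : ℤ) : Pt :=
  if isPer x then
    (if n = 0 then unary (fun m => Wenc x (pmin x) m) else (fun _ => false))
  else window (max (dpat x) 1) x n

def F (x : Cfg) : Cfg := fun n => coord (EXf x n) (EVf x n)

lemma patProp_encode {x : Cfg} {n i j : ℤ} :
    patProp x n (Encodable.encode ((i, j) : ℤ × ℤ)) ↔
      (¬ isPer x ∧ E0 (x (n + i)) (x (n + j))) := by
  rw [patProp, Encodable.encodek]
  exact Iff.rfl

lemma EXf_bit0 (x : Cfg) (m : ℤ) (c : ℕ) :
    EXf x m (Nat.pair 0 c) = cb (c = kindNat x m) := by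
  rw [EXf, Nat.unpair_pair]
  exact if_pos rfl

lemma EXf_bit1 (x : Cfg) (m : ℤ) (c : ℕ) :
    EXf x m (Nat.pair 1 c) = cb (patProp x m c) := by
  rw [EXf, Nat.unpair_pair]
  exact (if_neg one_ne_zero).trans (if_pos rfl)

lemma EXf_eq_kind {x y : Cfg} {m n : ℤ} (h : EXf x m = EXf y n) :
    kindNat x m = kindNat y n := by
  have h1 := congrFun h (Nat.pair 0 (kindNat x m))
  rw [EXf_bit0, EXf_bit0, cb_eq_cb_iff] at h1
  exact h1.1 rfl

lemma EXf_eq_pat {x y : Cfg} {m n : ℤ} (h : EXf x m = EXf y n) (c : ℕ) :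
    patProp x m c ↔ patProp y n c := by
  have h1 := congrFun h (Nat.pair 1 c)
  rw [EXf_bit1, EXf_bit1] at h1
  exact cb_eq_cb_iff.1 h1

lemma EXf_eq_of {x y : Cfg} {m n : ℤ} (hk : kindNat x m = kindNat y n)
    (hp : ∀ c, patProp x m c ↔ patProp y n c) : EXf x m = EXf y n := by
  funext s
  rw [EXf, EXf]
  by_cases h0 : (Nat.unpair s).1 = 0
  · rw [if_pos h0, if_pos h0]
    exact cb_congr (by rw [hk])
  · rw [if_neg h0, if_neg h0]
    by_cases h1 : (Nat.unpair s).1 = 1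
    · rw [if_pos h1, if_pos h1]
      exact cb_congr (hp _)
    · rw [if_neg h1, if_neg h1]

/-- The image of every configuration is pairwise inequivalent. -/
theorem pi_image (x : Cfg) {m n : ℤ} (hmn : m ≠ n) : ¬ E0 (F x m) (F x n) := by
  intro h
  simp only [F] at h
  rw [coord_e0_iff] at h
  obtain ⟨hEX, hEV⟩ := h
  by_cases hP : isPer x
  · have hkind := EXf_eq_kind hEX
    rw [kindNat, kindNat, if_pos hP, if_pos hP] at hkind
    by_cases hm0 : m = 0
    · have hn0 : ¬ (n = 0) := fun h0 => hmn (by rw [hm0, h0])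
      rw [if_pos hm0, if_neg hn0] at hkind
      have := (Nat.pair_eq_pair.1 hkind).1
      omega
    · by_cases hn0 : n = 0
      · rw [if_neg hm0, if_pos hn0] at hkind
        have := (Nat.pair_eq_pair.1 hkind).1
        omega
      · rw [if_neg hm0, if_neg hn0] at hkind
        exact hmn (intEnc_inj (Nat.pair_eq_pair.1 hkind).2)
  · have hpat' : PatPer (n - m) x := by
      intro i j
      have h1 := EXf_eq_pat hEX (Encodable.encode ((i - m, j - m) : ℤ × ℤ))
      rw [patProp_encode, patProp_encode] at h1
      have h2 : E0 (x (m + (i - m))) (x (m + (j - m))) ↔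
          E0 (x (n + (i - m))) (x (n + (j - m))) := by
        constructor
        · intro hh; exact (h1.1 ⟨hP, hh⟩).2
        · intro hh; exact (h1.2 ⟨hP, hh⟩).2
      rwa [show m + (i - m) = i by ring, show m + (j - m) = j by ring,
        show n + (i - m) = i + (n - m) by ring,
        show n + (j - m) = j + (n - m) by ring] at h2
    rw [EVf, EVf, if_neg hP, if_neg hP] at hEV
    have hwin := (window_e0_iff (by omega : 0 < max (dpat x) 1)).1 hEV
    exact aper_core hP hmn hpat' hwin

/-- Main equivalence: F is a reduction from the jump to itself restricted to p.i. part. -/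
theorem main_iff (x y : Cfg) : Rel x y ↔ Rel (F x) (F y) := by
  by_cases hx : isPer x <;> by_cases hy : isPer y
  · -- both periodic
    constructor
    · intro hrel
      have hpq : pmin x = pmin y := rel_pmin_eq hrel
      obtain ⟨γ, hγ⟩ := hrel
      have hp : 0 < pmin x := pmin_pos hx
      obtain ⟨M, hM⟩ := per_forward hp (pmin_spec hx) hγ
      refine ⟨0, fun a => ?_⟩
      simp only [sub_zero, F]
      rw [coord_e0_iff]
      constructor
      · apply EXf_eq_of
        · rw [kindNat, kindNat, if_pos hx, if_pos hy, hpq]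
        · intro c
          rw [patProp, patProp]
          exact ⟨fun h => absurd h.1 (by simp [hx]), fun h => absurd h.1 (by simp [hy])⟩
      · rw [EVf, EVf, if_pos hx, if_pos hy]
        by_cases ha : a = 0
        · rw [if_pos ha, if_pos ha, unary_e0_iff, ← hpq]
          exact ⟨M, hM⟩
        · rw [if_neg ha, if_neg ha]
          exact e0_refl _
    · rintro ⟨δ, hδ⟩
      have hδ0 : δ = 0 := by
        by_contra hd
        have h := hδ δ
        simp only [sub_self, F] at h
        rw [coord_e0_iff] at h
        have hkind := EXf_eq_kind h.1
        rw [kindNat, kindNat, if_pos hx, if_pos hy, if_pos rfl, if_neg hd] at hkind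
        have := (Nat.pair_eq_pair.1 hkind).1
        omega
      subst hδ0
      have h := hδ 0
      simp only [sub_zero, F] at h
      rw [coord_e0_iff] at h
      obtain ⟨hEX, hEV⟩ := h
      have hkind := EXf_eq_kind hEX
      rw [kindNat, kindNat, if_pos hx, if_pos hy, if_pos rfl, if_pos rfl] at hkind
      have hpq : pmin x = pmin y := (Nat.pair_eq_pair.1 hkind).2
      rw [EVf, EVf, if_pos hx, if_pos hy, if_pos rfl, if_pos rfl, unary_e0_iff] at hEV
      obtain ⟨M, hM⟩ := hEV
      have hM' : ∀ c ≥ M, Wenc x (pmin x) c = Wenc y (pmin x) c := by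
        intro c hc
        nth_rewrite 2 [hpq]
        exact hM c hc
      exact per_complete hx hy rfl hpq.symm hM'
  · -- x periodic, y aperiodic
    constructor
    · intro hrel; exact absurd ((rel_isPer_iff hrel).1 hx) hy
    · rintro ⟨δ, hδ⟩
      have h := hδ δ
      simp only [sub_self, F] at h
      rw [coord_e0_iff] at h
      have hkind := EXf_eq_kind h.1
      rw [kindNat, kindNat, if_pos hx, if_neg hy, if_pos rfl] at hkind
      have := (Nat.pair_eq_pair.1 hkind).1; omega
  · -- x aperiodic, y periodic
    constructor
    · intro hrel; exact absurd ((rel_isPer_iff hrel).2 hy) hx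
    · rintro ⟨δ, hδ⟩
      have h := hδ δ
      simp only [sub_self, F] at h
      rw [coord_e0_iff] at h
      have hkind := EXf_eq_kind h.1
      rw [kindNat, kindNat, if_neg hx, if_pos hy] at hkind
      by_cases hd : δ = 0
      · rw [if_pos hd] at hkind
        have := (Nat.pair_eq_pair.1 hkind).1
        omega
      · rw [if_neg hd] at hkind
        have := (Nat.pair_eq_pair.1 hkind).1
        omega
  · -- both aperiodic
    constructor
    · intro hrel
      have hd : dpat x = dpat y := rel_dpat_eq hrel
      obtain ⟨γ, hγ⟩ := hrel
      refine ⟨γ, fun a => ?_⟩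
      simp only [F]
      rw [coord_e0_iff]
      constructor
      · apply EXf_eq_of
        · rw [kindNat, kindNat, if_neg hx, if_neg hy, hd]
        · intro c
          rw [patProp, patProp]
          rcases hdec : (Encodable.decode (α := ℤ × ℤ) c) with _ | q
          · simp
          · simp only [Option.elim]
            constructor
            · rintro ⟨_, hE⟩
              refine ⟨hy, ?_⟩
              have h1 := hγ (a + q.1)
              have h2 := hγ (a + q.2)
              rw [show a + q.1 - γ = a - γ + q.1 by ring] at h1
              rw [show a + q.2 - γ = a - γ + q.2 by ring] at h2
              exact e0_trans (e0_trans (e0_symm h1) hE) h2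
            · rintro ⟨_, hE⟩
              refine ⟨hx, ?_⟩
              have h1 := hγ (a + q.1)
              have h2 := hγ (a + q.2)
              rw [show a + q.1 - γ = a - γ + q.1 by ring] at h1
              rw [show a + q.2 - γ = a - γ + q.2 by ring] at h2
              exact e0_trans (e0_trans h1 hE) (e0_symm h2)
      · rw [EVf, EVf, if_neg hx, if_neg hy, hd,
          window_e0_iff (by omega : 0 < max (dpat y) 1)]
        intro i hi
        have := hγ (a + i)
        rwa [show a + i - γ = a - γ + i by ring] at this
    · rintro ⟨δ, hδ⟩
      refine ⟨δ, fun a => ?_⟩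
      have h := hδ a
      simp only [F] at h
      rw [coord_e0_iff] at h
      obtain ⟨hEX, hEV⟩ := h
      have hkind := EXf_eq_kind hEX
      rw [kindNat, kindNat, if_neg hx, if_neg hy] at hkind
      have hd : dpat x = dpat y := (Nat.pair_eq_pair.1 hkind).2
      rw [EVf, EVf, if_neg hx, if_neg hy, hd] at hEV
      have hwin := (window_e0_iff (by omega : 0 < max (dpat y) 1)).1 hEV 0 (by omega)
      simpa using hwin

end E0Red

noncomputable section
namespace E0Red

open Filter Classical

attribute [local instance] Classical.propDecidable

local instance : MeasurableSpace (List Bool) := ⊤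
local instance : MeasurableSingletonClass (List Bool) := ⟨fun _ => trivial⟩
local instance : MeasurableSpace (List (List Bool)) := ⊤
local instance : MeasurableSingletonClass (List (List Bool)) := ⟨fun _ => trivial⟩

lemma measurable_of_countable_dom {β γ : Type*} [MeasurableSpace β] [Countable β]
    [MeasurableSingletonClass β] [MeasurableSpace γ] (f : β → γ) : Measurable f :=
  fun _ _ => (Set.to_countable _).measurableSet

lemma measurable_bind' {α β γ : Type*} [MeasurableSpace α] [MeasurableSpace β] [Countable β]
    [MeasurableSingletonClass β] [MeasurableSpace γ]
    {u : α → β} (hu : Measurable u) {g : α → β → γ} (hg : ∀ b, Measurable (fun x => g x b)) :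
    Measurable (fun x => g x (u x)) := by
  intro s hs
  have heq : (fun x => g x (u x)) ⁻¹' s
      = ⋃ b : β, (u ⁻¹' {b}) ∩ ((fun x => g x b) ⁻¹' s) := by
    ext x
    simp only [Set.mem_preimage, Set.mem_iUnion, Set.mem_inter_iff, Set.mem_singleton_iff]
    constructor
    · intro h; exact ⟨u x, rfl, h⟩
    · rintro ⟨b, hb, h⟩; rwa [← hb] at h
  rw [heq]
  exact MeasurableSet.iUnion fun b => (hu (measurableSet_singleton b)).inter (hg b hs)

lemma m_bit (i : ℤ) (j : ℕ) : Measurable (fun x : Cfg => x i j) :=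
  (measurable_pi_apply j).comp (measurable_pi_apply i)

lemma ms_const (p : Prop) : MeasurableSet {x : Cfg | p} := by
  by_cases h : p <;> simp [h]

lemma ms_bit_eq (i : ℤ) (n : ℕ) (b : Bool) : MeasurableSet {x : Cfg | x i n = b} :=
  m_bit i n (measurableSet_singleton b)

lemma ms_bitEq (i j : ℤ) (n : ℕ) : MeasurableSet {x : Cfg | x i n = x j n} := by
  have heq : {x : Cfg | x i n = x j n} =
      ({x : Cfg | x i n = true} ∩ {x : Cfg | x j n = true}) ∪
      ({x : Cfg | x i n = false} ∩ {x : Cfg | x j n = false}) := by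
    ext x
    simp only [Set.mem_setOf_eq, Set.mem_union, Set.mem_inter_iff]
    cases hx : x i n <;> cases hy : x j n <;> simp
  rw [heq]
  exact ((ms_bit_eq i n true).inter (ms_bit_eq j n true)).union
    ((ms_bit_eq i n false).inter (ms_bit_eq j n false))

lemma ms_e0 (i j : ℤ) : MeasurableSet {x : Cfg | E0 (x i) (x j)} := by
  have heq : {x : Cfg | E0 (x i) (x j)}
      = ⋃ N : ℕ, ⋂ n : ℕ, ⋂ (_ : n ≥ N), {x : Cfg | x i n = x j n} := by
    ext x
    simp only [Set.mem_setOf_eq, Set.mem_iUnion, Set.mem_iInter, e0_def]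
  rw [heq]
  exact MeasurableSet.iUnion fun N => MeasurableSet.iInter fun n =>
    MeasurableSet.iInter fun _ => ms_bitEq i j n

lemma ms_iff {P Q : Cfg → Prop} (hs : MeasurableSet {x | P x}) (ht : MeasurableSet {x | Q x}) :
    MeasurableSet {x : Cfg | P x ↔ Q x} := by
  have heq : {x : Cfg | P x ↔ Q x}
      = ({x | P x} ∩ {x | Q x}) ∪ ({x | P x}ᶜ ∩ {x | Q x}ᶜ) := by
    ext x
    simp only [Set.mem_setOf_eq, Set.mem_union, Set.mem_inter_iff, Set.mem_compl_iff]
    by_cases hx : P x <;> by_cases hy : Q x <;> simp [hx, hy]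
  rw [heq]
  exact (hs.inter ht).union (hs.compl.inter ht.compl)

lemma ms_confPer (d : ℤ) : MeasurableSet {x : Cfg | ConfPer d x} := by
  have heq : {x : Cfg | ConfPer d x} = ⋂ n : ℤ, {x : Cfg | E0 (x n) (x (n + d))} := by
    ext x; simp only [Set.mem_setOf_eq, Set.mem_iInter, ConfPer]
  rw [heq]
  exact MeasurableSet.iInter fun n => ms_e0 n (n + d)

lemma ms_patPer (d : ℤ) : MeasurableSet {x : Cfg | PatPer d x} := by
  have heq : {x : Cfg | PatPer d x} = ⋂ i : ℤ, ⋂ j : ℤ,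
      {x : Cfg | E0 (x i) (x j) ↔ E0 (x (i + d)) (x (j + d))} := by
    ext x; simp only [Set.mem_setOf_eq, Set.mem_iInter, PatPer]
  rw [heq]
  exact MeasurableSet.iInter fun i => MeasurableSet.iInter fun j =>
    ms_iff (ms_e0 i j) (ms_e0 (i + d) (j + d))

lemma ms_isPer : MeasurableSet {x : Cfg | isPer x} := by
  have heq : {x : Cfg | isPer x} = ⋃ p : ℕ, ⋃ (_ : 0 < p), {x : Cfg | ConfPer (p : ℤ) x} := by
    ext x; simp only [Set.mem_setOf_eq, Set.mem_iUnion, isPer]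
    constructor
    · rintro ⟨p, h1, h2⟩; exact ⟨p, h1, h2⟩
    · rintro ⟨p, h1, h2⟩; exact ⟨p, h1, h2⟩
  rw [heq]
  exact MeasurableSet.iUnion fun p => MeasurableSet.iUnion fun _ => ms_confPer p

lemma ms_hasPat : MeasurableSet {x : Cfg | hasPat x} := by
  have heq : {x : Cfg | hasPat x} = ⋃ p : ℕ, ⋃ (_ : 0 < p), {x : Cfg | PatPer (p : ℤ) x} := by
    ext x; simp only [Set.mem_setOf_eq, Set.mem_iUnion, hasPat]
    constructor
    · rintro ⟨p, h1, h2⟩; exact ⟨p, h1, h2⟩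
    · rintro ⟨p, h1, h2⟩; exact ⟨p, h1, h2⟩
  rw [heq]
  exact MeasurableSet.iUnion fun p => MeasurableSet.iUnion fun _ => ms_patPer p

lemma ms_pmin_eq (c : ℕ) : MeasurableSet {x : Cfg | pmin x = c} := by
  have heq : {x : Cfg | pmin x = c} =
      ({x : Cfg | ¬ isPer x} ∩ {x : Cfg | c = 0}) ∪
      ({x : Cfg | isPer x} ∩ (({x : Cfg | 0 < c} ∩ {x : Cfg | ConfPer (c : ℤ) x}) ∩
        ⋂ k : ℕ, ⋂ (_ : k < c), {x : Cfg | ¬ (0 < k ∧ ConfPer (k : ℤ) x)})) := by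
    ext x
    simp only [Set.mem_setOf_eq, Set.mem_union, Set.mem_inter_iff, Set.mem_iInter,
      Set.mem_compl_iff]
    by_cases h : isPer x
    · rw [pmin, dif_pos h]
      rw [Nat.find_eq_iff h]
      constructor
      · rintro ⟨⟨h1, h2⟩, h3⟩
        exact Or.inr ⟨h, ⟨h1, h2⟩, fun k hk => h3 k hk⟩
      · rintro (⟨hn, _⟩ | ⟨_, ⟨h1, h2⟩, h3⟩)
        · exact absurd h hn
        · exact ⟨⟨h1, h2⟩, fun m hm => h3 m hm⟩
    · rw [pmin, dif_neg h]
      constructor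
      · intro h0; exact Or.inl ⟨h, h0.symm⟩
      · rintro (⟨_, h0⟩ | ⟨hp, _⟩)
        · exact h0.symm
        · exact absurd hp h
  rw [heq]
  exact (ms_isPer.compl.inter (ms_const _)).union
    (ms_isPer.inter (((ms_const _).inter (ms_confPer _)).inter
      (MeasurableSet.iInter fun k => MeasurableSet.iInter fun _ =>
        (((ms_const (0 < k)).inter (ms_confPer _))).compl)))

lemma ms_dpat_eq (c : ℕ) : MeasurableSet {x : Cfg | dpat x = c} := by
  have heq : {x : Cfg | dpat x = c} =
      ({x : Cfg | ¬ hasPat x} ∩ {x : Cfg | c = 0}) ∪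
      ({x : Cfg | hasPat x} ∩ (({x : Cfg | 0 < c} ∩ {x : Cfg | PatPer (c : ℤ) x}) ∩
        ⋂ k : ℕ, ⋂ (_ : k < c), {x : Cfg | ¬ (0 < k ∧ PatPer (k : ℤ) x)})) := by
    ext x
    simp only [Set.mem_setOf_eq, Set.mem_union, Set.mem_inter_iff, Set.mem_iInter,
      Set.mem_compl_iff]
    by_cases h : hasPat x
    · rw [dpat, dif_pos h]
      rw [Nat.find_eq_iff h]
      constructor
      · rintro ⟨⟨h1, h2⟩, h3⟩
        exact Or.inr ⟨h, ⟨h1, h2⟩, fun k hk => h3 k hk⟩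
      · rintro (⟨hn, _⟩ | ⟨_, ⟨h1, h2⟩, h3⟩)
        · exact absurd h hn
        · exact ⟨⟨h1, h2⟩, fun m hm => h3 m hm⟩
    · rw [dpat, dif_neg h]
      constructor
      · intro h0; exact Or.inl ⟨h, h0.symm⟩
      · rintro (⟨_, h0⟩ | ⟨hp, _⟩)
        · exact h0.symm
        · exact absurd hp h
  rw [heq]
  exact (ms_hasPat.compl.inter (ms_const _)).union
    (ms_hasPat.inter (((ms_const _).inter (ms_patPer _)).inter
      (MeasurableSet.iInter fun k => MeasurableSet.iInter fun _ =>
        (((ms_const (0 < k)).inter (ms_patPer _))).compl)))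

lemma m_pmin : Measurable (fun x : Cfg => pmin x) :=
  measurable_to_countable' fun c => ms_pmin_eq c

lemma m_dpat : Measurable (fun x : Cfg => dpat x) :=
  measurable_to_countable' fun c => ms_dpat_eq c

lemma m_cb {P : Cfg → Prop} (h : MeasurableSet {x | P x}) :
    Measurable fun x => cb (P x) := by
  apply measurable_to_countable'
  intro b
  cases b
  · have heq : (fun x => cb (P x)) ⁻¹' {false} = {x | P x}ᶜ := by
      ext x
      simp only [Set.mem_preimage, Set.mem_singleton_iff, Set.mem_compl_iff, Set.mem_setOf_eq]
      by_cases hp : P x <;> simp [cb, hp]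
    rw [heq]; exact h.compl
  · have heq : (fun x => cb (P x)) ⁻¹' {true} = {x | P x} := by
      ext x
      simp only [Set.mem_preimage, Set.mem_singleton_iff, Set.mem_setOf_eq]
      by_cases hp : P x <;> simp [cb, hp]
    rw [heq]; exact h

end E0Red

noncomputable section
namespace E0Red

open Filter Classical

attribute [local instance] Classical.propDecidable

local instance : MeasurableSpace (List Bool) := ⊤
local instance : MeasurableSingletonClass (List Bool) := ⟨fun _ => trivial⟩
local instance : MeasurableSpace (List (List Bool)) := ⊤
local instance : MeasurableSingletonClass (List (List Bool)) := ⟨fun _ => trivial⟩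

lemma ms_colEq (p m : ℕ) (l : List Bool) : MeasurableSet {x : Cfg | Col x p m = l} := by
  by_cases hlen : l.length = p
  · have heq : {x : Cfg | Col x p m = l}
        = ⋂ r : ℕ, ⋂ (_ : r < p), {x : Cfg | x (r : ℤ) m = l.getD r false} := by
      ext x
      simp only [Set.mem_setOf_eq, Set.mem_iInter]
      constructor
      · intro h r hr
        have h2 : (Col x p m)[r]'(by rw [col_length]; exact hr)
            = l[r]'(by rw [hlen]; exact hr) := by simp only [h]
        rw [col_getElem hr] at h2
        rw [h2, List.getD_eq_getElem l false (by rw [hlen]; exact hr)]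
      · intro h
        apply List.ext_getElem (by rw [col_length, hlen])
        intro r h1 h2
        have hr : r < p := by rwa [col_length] at h1
        rw [col_getElem hr, h r hr, List.getD_eq_getElem l false h2]
    rw [heq]
    exact MeasurableSet.iInter fun r => MeasurableSet.iInter fun hr =>
      ms_bit_eq (r : ℤ) m (l.getD r false)
  · have heq : {x : Cfg | Col x p m = l} = ∅ := by
      ext x
      simp only [Set.mem_setOf_eq, Set.mem_empty_iff_false, iff_false]
      intro h
      exact hlen (by rw [← h, col_length])
    rw [heq]
    exact MeasurableSet.empty

lemma m_col (p m : ℕ) : Measurable (fun x : Cfg => Col x p m) :=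
  measurable_to_countable' fun l => ms_colEq p m l

lemma ms_Tk (p k m : ℕ) : MeasurableSet {x : Cfg | Tk x p k m} :=
  m_col p m (show MeasurableSet {l : List Bool | l.rotate k ≠ l} from trivial)

lemma ms_tkf_eq (p k m v : ℕ) : MeasurableSet {x : Cfg | tkf x p k m = v} := by
  have heq : {x : Cfg | tkf x p k m = v} =
      ({x : Cfg | ¬ ∃ i, Tk x p k (m + i)} ∩ {x : Cfg | v = m}) ∪
      ((⋃ i : ℕ, {x : Cfg | Tk x p k (m + i)}) ∩
        ({x : Cfg | m ≤ v} ∩ ({x : Cfg | Tk x p k (m + (v - m))} ∩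
          ⋂ j : ℕ, ⋂ (_ : j < v - m), {x : Cfg | ¬ Tk x p k (m + j)}))) := by
    ext x
    simp only [Set.mem_setOf_eq, Set.mem_union, Set.mem_inter_iff, Set.mem_iInter,
      Set.mem_iUnion]
    by_cases h : ∃ i, Tk x p k (m + i)
    · rw [tkf, dif_pos h]
      constructor
      · intro hv
        have h1 := Nat.find_spec h
        have h2 : Nat.find h = v - m := by omega
        refine Or.inr ⟨h, by omega, by rw [← h2]; exact h1, fun j hj => ?_⟩
        exact Nat.find_min h (by omega)
      · rintro (⟨hn, _⟩ | ⟨_, hmv, hTk, hmin⟩)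
        · exact absurd h hn
        · have h2 : Nat.find h = v - m := by
            have h3 := Nat.find_spec h
            have h4 := Nat.find_min' h hTk
            rcases Nat.lt_or_ge (Nat.find h) (v - m) with hlt | hge
            · exact absurd h3 (hmin _ hlt)
            · omega
          omega
    · rw [tkf, dif_neg h]
      constructor
      · intro hv; exact Or.inl ⟨h, by omega⟩
      · rintro (⟨_, hv⟩ | ⟨⟨i, hi⟩, _⟩)
        · omega
        · exact absurd ⟨i, hi⟩ h
  rw [heq]
  refine MeasurableSet.union ?_ ?_
  · refine MeasurableSet.inter ?_ (ms_const _)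
    have : {x : Cfg | ¬ ∃ i, Tk x p k (m + i)} = (⋃ i : ℕ, {x : Cfg | Tk x p k (m + i)})ᶜ := by
      ext x; simp
    rw [this]
    exact (MeasurableSet.iUnion fun i => ms_Tk p k (m + i)).compl
  · exact (MeasurableSet.iUnion fun i => ms_Tk p k (m + i)).inter
      ((ms_const _).inter ((ms_Tk p k _).inter
        (MeasurableSet.iInter fun j => MeasurableSet.iInter fun _ => (ms_Tk p k (m + j)).compl)))

lemma m_tkf (p k m : ℕ) : Measurable (fun x : Cfg => tkf x p k m) :=
  measurable_to_countable' fun v => ms_tkf_eq p k m v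

lemma m_tauf (p m i : ℕ) : Measurable (fun x : Cfg => tauf x p m i) := by
  by_cases h0 : i = 0
  · simp only [tauf, if_pos h0]
    exact m_col p m
  · by_cases h1 : i ≤ p - 1
    · simp only [tauf, if_neg h0, if_pos h1]
      exact measurable_bind' (m_tkf p i m) (fun v => m_col p v)
    · simp only [tauf, if_neg h0, if_neg h1]
      exact measurable_bind' (m_tkf p (i - (p - 1)) (m + 1)) (fun v => m_col p v)

lemma m_list_map {n : ℕ} {G : Cfg → ℕ → List Bool} (hG : ∀ i, Measurable (fun x => G x i)) :
    Measurable (fun x : Cfg => (List.range n).map (G x)) := by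
  induction n with
  | zero => simp only [List.range_zero, List.map_nil]; exact measurable_const
  | succ n ih =>
    have heq : (fun x : Cfg => (List.range (n + 1)).map (G x))
        = fun x => ((List.range n).map (G x)) ++ [G x n] := by
      funext x
      rw [List.range_succ, List.map_append, List.map_singleton]
    rw [heq]
    exact measurable_bind' ih (fun L =>
      (measurable_of_countable_dom (fun b : List Bool => L ++ [b])).comp (hG n))

lemma m_tau (p m : ℕ) : Measurable (fun x : Cfg => tau x p m) := by
  rw [show (fun x : Cfg => tau x p m) = fun x => (List.range (2 * p - 1)).map (tauf x p m)
    from rfl]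
  exact m_list_map (fun i => m_tauf p m i)

lemma m_Wenc (p m : ℕ) : Measurable (fun x : Cfg => Wenc x p m) :=
  (measurable_of_countable_dom (pureWenc p)).comp (m_tau p m)

lemma m_Wenc_pmin (m : ℕ) : Measurable (fun x : Cfg => Wenc x (pmin x) m) :=
  measurable_bind' m_pmin (fun p => m_Wenc p m)

lemma m_kind (n : ℤ) : Measurable (fun x : Cfg => kindNat x n) := by
  have h1 : Measurable (fun x : Cfg =>
      (if n = 0 then Nat.pair 1 (pmin x) else Nat.pair 2 (intEnc n))) := by
    by_cases hn : n = 0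
    · simp only [if_pos hn]
      exact (measurable_of_countable_dom (fun v => Nat.pair 1 v)).comp m_pmin
    · simp only [if_neg hn]
      exact measurable_const
  have h2 : Measurable (fun x : Cfg => Nat.pair 0 (dpat x)) :=
    (measurable_of_countable_dom (fun v => Nat.pair 0 v)).comp m_dpat
  exact Measurable.ite ms_isPer h1 h2

lemma ms_patProp (n : ℤ) (c : ℕ) : MeasurableSet {x : Cfg | patProp x n c} := by
  rcases hdec : (Encodable.decode (α := ℤ × ℤ) c) with _ | q
  · have heq : {x : Cfg | patProp x n c} = ∅ := by
      ext x
      simp only [Set.mem_setOf_eq, Set.mem_empty_iff_false, iff_false, patProp, hdec]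
      rintro ⟨_, h⟩
      exact h
    rw [heq]; exact MeasurableSet.empty
  · have heq : {x : Cfg | patProp x n c}
        = {x : Cfg | ¬ isPer x} ∩ {x : Cfg | E0 (x (n + q.1)) (x (n + q.2))} := by
      ext x
      simp only [Set.mem_setOf_eq, Set.mem_inter_iff, patProp, hdec, Option.elim]
    rw [heq]
    exact ms_isPer.compl.inter (ms_e0 _ _)

lemma m_EXf_bit (n : ℤ) (s : ℕ) : Measurable (fun x : Cfg => EXf x n s) := by
  rw [show (fun x : Cfg => EXf x n s) = fun x =>
    (if (Nat.unpair s).1 = 0 then cb ((Nat.unpair s).2 = kindNat x n)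
     else if (Nat.unpair s).1 = 1 then cb (patProp x n (Nat.unpair s).2)
     else false) from rfl]
  by_cases h0 : (Nat.unpair s).1 = 0
  · simp only [if_pos h0]
    apply m_cb
    have : {x : Cfg | (Nat.unpair s).2 = kindNat x n}
        = (fun x : Cfg => kindNat x n) ⁻¹' {v | (Nat.unpair s).2 = v} := rfl
    rw [this]
    exact m_kind n ((Set.to_countable _).measurableSet)
  · simp only [if_neg h0]
    by_cases h1 : (Nat.unpair s).1 = 1
    · simp only [if_pos h1]
      exact m_cb (ms_patProp n _)
    · simp only [if_neg h1]
      exact measurable_const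

lemma m_EVf_bit (n : ℤ) (r : ℕ) : Measurable (fun x : Cfg => EVf x n r) := by
  have h1 : Measurable (fun x : Cfg =>
      (if n = 0 then unary (fun m => Wenc x (pmin x) m) else (fun _ => false)) r) := by
    by_cases hn : n = 0
    · simp only [if_pos hn]
      rw [show (fun x : Cfg => unary (fun m => Wenc x (pmin x) m) r)
          = fun x => cb ((Nat.unpair r).2 < Wenc x (pmin x) (Nat.unpair r).1) from rfl]
      apply m_cb
      have : {x : Cfg | (Nat.unpair r).2 < Wenc x (pmin x) (Nat.unpair r).1}
          = (fun x : Cfg => Wenc x (pmin x) (Nat.unpair r).1) ⁻¹'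
            {v | (Nat.unpair r).2 < v} := rfl
      rw [this]
      exact m_Wenc_pmin _ ((Set.to_countable _).measurableSet)
    · simp only [if_neg hn]
      exact measurable_const
  have h2 : Measurable (fun x : Cfg => window (max (dpat x) 1) x n r) := by
    rw [show (fun x : Cfg => window (max (dpat x) 1) x n r) = fun x =>
      cb ((Nat.unpair r).1 < max (dpat x) 1 ∧
        x (n + (Nat.unpair r).1) (Nat.unpair r).2 = true) from rfl]
    apply m_cb
    have heq : {x : Cfg | (Nat.unpair r).1 < max (dpat x) 1 ∧
        x (n + (Nat.unpair r).1) (Nat.unpair r).2 = true}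
        = ((fun x : Cfg => dpat x) ⁻¹' {v | (Nat.unpair r).1 < max v 1}) ∩
          {x : Cfg | x (n + (Nat.unpair r).1) (Nat.unpair r).2 = true} := rfl
    rw [heq]
    exact (m_dpat ((Set.to_countable _).measurableSet)).inter (ms_bit_eq _ _ true)
  have heq : (fun x : Cfg => EVf x n r) = fun x =>
    (if isPer x then
      (if n = 0 then unary (fun m => Wenc x (pmin x) m) else (fun _ => false)) r
     else window (max (dpat x) 1) x n r) := by
    funext x
    rw [EVf]
    by_cases h : isPer x
    · rw [if_pos h, if_pos h]
    · rw [if_neg h, if_neg h]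
  rw [heq]
  exact Measurable.ite ms_isPer h1 h2

lemma m_F_bit (n : ℤ) (b : ℕ) : Measurable (fun x : Cfg => F x n b) := by
  rw [show (fun x : Cfg => F x n b) = fun x =>
    (if b % 2 = 0 then EXf x n (Nat.unpair (b / 2)).1 else EVf x n (b / 2)) from rfl]
  by_cases hb : b % 2 = 0
  · simp only [if_pos hb]
    exact m_EXf_bit n _
  · simp only [if_neg hb]
    exact m_EVf_bit n _

lemma m_F_coord (n : ℤ) : Measurable (fun x : Cfg => F x n) :=
  measurable_pi_lambda _ (fun b => m_F_bit n b)

end E0Red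

noncomputable section
namespace E0Red

open Filter Classical

attribute [local instance] Classical.propDecidable

abbrev MCfg := (Multiplicative ℤ) → (ℕ → Bool)

def toCfg (x : MCfg) : Cfg := fun n => x (Multiplicative.ofAdd n)

def Fm (x : MCfg) : MCfg := fun α => F (toCfg x) (Multiplicative.toAdd α)

lemma toCfg_Fm (x : MCfg) : toCfg (Fm x) = F (toCfg x) := rfl

lemma jump_iff (x y : MCfg) :
    GammaJump (Multiplicative ℤ) E0 x y ↔ Rel (toCfg x) (toCfg y) := by
  constructor
  · rintro ⟨γ, h⟩
    refine ⟨Multiplicative.toAdd γ, fun a => ?_⟩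
    have h2 := h (Multiplicative.ofAdd a)
    have e : γ⁻¹ * Multiplicative.ofAdd a
        = Multiplicative.ofAdd (a - Multiplicative.toAdd γ) := by
      rw [ofAdd_sub, ofAdd_toAdd, div_eq_mul_inv, mul_comm]
    rw [e] at h2
    exact h2
  · rintro ⟨g, h⟩
    refine ⟨Multiplicative.ofAdd g, fun α => ?_⟩
    have h2 := h (Multiplicative.toAdd α)
    have e : (Multiplicative.ofAdd g)⁻¹ * α
        = Multiplicative.ofAdd (Multiplicative.toAdd α - g) := by
      rw [ofAdd_sub, ofAdd_toAdd, div_eq_mul_inv, mul_comm]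
    show E0 (x ((Multiplicative.ofAdd g)⁻¹ * α)) (y α)
    rw [e]
    exact h2

lemma Fm_mem (x : MCfg) : Fm x ∈ PIPart (Multiplicative ℤ) E0 := by
  intro γ δ hne
  exact pi_image (toCfg x) (m := Multiplicative.toAdd γ) (n := Multiplicative.toAdd δ)
    (fun h => hne (Multiplicative.toAdd.injective h))

lemma m_toCfg : Measurable toCfg :=
  measurable_pi_lambda _ (fun n => measurable_pi_apply _)

lemma m_Fm : Measurable Fm :=
  measurable_pi_lambda _ (fun α => (m_F_coord (Multiplicative.toAdd α)).comp m_toCfg)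

end E0Red
end

/-- `E₀^{[ℤ]}` is Borel reducible to its pairwise-inequivalent part. -/
theorem e0_zJump_borelReducible_pi_part :
    BorelReducible (GammaJump (Multiplicative ℤ) E0)
      (fun a b : PIPart (Multiplicative ℤ) E0 =>
        GammaJump (Multiplicative ℤ) E0 a.1 b.1) := by
  refine ⟨fun x => ⟨E0Red.Fm x, E0Red.Fm_mem x⟩, E0Red.m_Fm.subtype_mk, fun x x' => ?_⟩
  have h1 := E0Red.jump_iff x x'
  have h2 := E0Red.jump_iff (E0Red.Fm x) (E0Red.Fm x')
  rw [E0Red.toCfg_Fm, E0Red.toCfg_Fm] at h2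
  exact h1.trans ((E0Red.main_iff _ _).trans h2.symm)
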